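/- Ramanujan's sum C : ℤ₊² → ℝ, C(m, n) = ∑_{d ∣ gcd(m, n)} d·μ(n/d), is not positive definite as a function of two variables; that is, there exists a finite nonempty set S ⊆ ℤ₊² such that the matrix with entries C(gcd(x₁, y₁), gcd(x₂, y₂)) for (x₁, x₂), (y₁, y₂) ∈ S is not positive semidefinite. -/

import Mathlib

/-- A bivariate arithmetic function `f : ℤ₊² → ℝ` (positive integers encoded as positive
natural numbers) is *positive definite* if for every finite nonempty set `S ⊆ ℤ₊²` the
matrix with entries `f(gcd(x₁,y₁), gcd(x₂,y₂))` for `(x₁,x₂), (y₁,y₂) ∈ S` is positive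
semidefinite. -/
def IsPosDefArith2 (f : ℕ → ℕ → ℝ) : Prop :=
  ∀ S : Finset (ℕ × ℕ), S.Nonempty → (∀ p ∈ S, 0 < p.1 ∧ 0 < p.2) →
    (Matrix.of fun x y : S =>
      f (Nat.gcd x.1.1 y.1.1) (Nat.gcd x.1.2 y.1.2)).PosSemidef

/-- The arithmetic Möbius function, real valued. -/
noncomputable def muR (n : ℕ) : ℝ := ((ArithmeticFunction.moebius n : ℤ) : ℝ)

/-- Ramanujan's sum `C(m, n) = ∑_{d ∣ gcd(m, n)} d·μ(n/d)`. -/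
noncomputable def ramanujanC (m n : ℕ) : ℝ :=
  ∑ d ∈ (Nat.gcd m n).divisors, (d : ℝ) * muR (n / d)

/-- Ramanujan's sum `C(m, n)` is not positive definite as a function
of two variables. -/
lemma ramC12 : ramanujanC 1 2 = -1 := by
  unfold ramanujanC muR
  norm_num [Nat.divisors, Finset.filter_eq', ArithmeticFunction.moebius_apply_prime Nat.prime_two]

theorem ramanujan_not_posDefArith2 : ¬ IsPosDefArith2 ramanujanC := by
  intro h
  have hS : ((1,2) : ℕ × ℕ) ∈ ({(1,2)} : Finset (ℕ × ℕ)) := by simp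
  have := h {(1,2)} ⟨(1,2), hS⟩ (by simp)
  have h2 := this.dotProduct_mulVec_nonneg (fun _ => 1)
  simp [dotProduct, Matrix.mulVec, ramC12] at h2

  linarith
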